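/- Let a ∈ ℝ, ε₀ > 0, and let ψ, ξ : (−ε₀, ε₀) → ℂ be functions of class C⁷. Then there exist 0 < ε ≤ ε₀ and a real-valued function χ : (−ε, ε) → ℝ of class C⁷ such that for all s ∈ (−ε, ε): H₀( s + s⁵ψ(s), −s²/2 + s⁶χ(s), −3/4, −(3i/4)s + s⁵ξ(s) ) = 0, i.e. the model Fefferman Hamiltonian vanishes along the initial data z₂ = s + s⁵ψ(s), p_{x₀} = −s²/2 + s⁶χ(s), p_{y₁} = −3/4, p_{z₂} = −(3i/4)s + s⁵ξ(s). -/

import Mathlib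

set_option maxHeartbeats 1600000


open Complex ComplexConjugate

/-- The model Fefferman Hamiltonian `H₀` associated to the hypersurface
`2 Re z₁ = |z₂|² + 2a|z₂|⁴ Re(z₂²)`, as a function of `(z₂, p_{x₀}, p_{y₁}, p_{z₂})`. -/
noncomputable def modelHamiltonian (a : ℝ) (z : ℂ) (p0 p1 : ℝ) (p : ℂ) : ℂ :=
  let zb : ℂ := conj z
  let pb : ℂ := conj p
  let n2 : ℂ := ((‖z‖ ^ 2 : ℝ) : ℂ)      -- |z₂|²
  let r2 : ℂ := (((z ^ 2).re : ℝ) : ℂ)             -- Re(z₂²)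
  24 * (a : ℂ) * r2 * (p0 : ℂ) ^ 2
    + (2 - (64 * (a : ℂ) / 3) * n2 * r2) * (p0 : ℂ) * (p1 : ℂ)
    + (Complex.I * (a : ℂ) / 3) * (24 * z ^ 2 * zb + 8 * zb ^ 3) * (p0 : ℂ) * p
    - (Complex.I * (a : ℂ) / 3) * (8 * z ^ 3 + 24 * z * zb ^ 2) * (p0 : ℂ) * pb
    + (1 / 3) * (-n2 + 4 * (a : ℂ) * n2 ^ 2 * r2) * (p1 : ℂ) ^ 2
    + (Complex.I / 3) * (zb - (a : ℂ) * z * (4 * n2 ^ 2 + 6 * zb ^ 4)) * (p1 : ℂ) * p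
    - (Complex.I / 3) * (z - (a : ℂ) * zb * (4 * n2 ^ 2 + 6 * z ^ 4)) * (p1 : ℂ) * pb
    - (1 / 3) * (1 - 16 * (a : ℂ) * n2 * r2) * ((‖p‖ ^ 2 : ℝ) : ℂ)


noncomputable def gA (a s : ℝ) (P Pc X Xc : ℂ) : ℂ :=
  ((1/2 : ℂ) * Xc * Complex.I + (-1/2 : ℂ) * X * Complex.I + (-3/8 : ℂ) * Pc + (-3/8 : ℂ) * P + (-5/2 : ℂ) * (a:ℂ) + (-1/3 : ℂ) * (s:ℂ)^4 * X * Xc + (-1/4 : ℂ) * (s:ℂ)^4 * Pc * X * Complex.I + (1/4 : ℂ) * (s:ℂ)^4 * P * Xc * Complex.I + (-3/16 : ℂ) * (s:ℂ)^4 * P * Pc + (-7/6 : ℂ) * (s:ℂ)^4 * (a:ℂ) * Xc * Complex.I + (7/6 : ℂ) * (s:ℂ)^4 * (a:ℂ) * X * Complex.I + (-35/8 : ℂ) * (s:ℂ)^4 * (a:ℂ) * Pc + (-35/8 : ℂ) * (s:ℂ)^4 * (a:ℂ) * P + (16/3 : ℂ) * (s:ℂ)^8 * (a:ℂ) * X *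 Xc + (-9/2 : ℂ) * (s:ℂ)^8 * (a:ℂ) * Pc * Xc * Complex.I + (8 : ℂ) * (s:ℂ)^8 * (a:ℂ) * Pc * X * Complex.I + (15/8 : ℂ) * (s:ℂ)^8 * (a:ℂ) * Pc^2 + (-8 : ℂ) * (s:ℂ)^8 * (a:ℂ) * P * Xc * Complex.I + (9/2 : ℂ) * (s:ℂ)^8 * (a:ℂ) * P * X * Complex.I + (-3 : ℂ) * (s:ℂ)^8 * (a:ℂ) * P * Pc + (15/8 : ℂ) * (s:ℂ)^8 * (a:ℂ) * P^2 + (32/3 : ℂ) * (s:ℂ)^12 * (a:ℂ) * Pc * X * Xc + (-5 : ℂ) * (s:ℂ)^12 * (a:ℂ) * Pc^2 * Xc * Complex.I + (12 : ℂ) * (s:ℂ)^12 * (a:ℂ) * Pc^2 * X * Complex.I + (13/4 : ℂ) * (s:ℂ)^12 * (a:ℂ) * Pc^3 + (32/3 : ℂ) * (s:ℂ)^12 * (a:ℂ) * P * X * Xc + (-16 : ℂ) * (s:ℂ)^12 * (a:ℂ) * P * Pc * Xc * Complex.I + (16 : ℂ) * (s:ℂ)^12 * (a:ℂ) * P * Pc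 * X * Complex.I + (9 : ℂ) * (s:ℂ)^12 * (a:ℂ) * P * Pc^2 + (-12 : ℂ) * (s:ℂ)^12 * (a:ℂ) * P^2 * Xc * Complex.I + (5 : ℂ) * (s:ℂ)^12 * (a:ℂ) * P^2 * X * Complex.I + (9 : ℂ) * (s:ℂ)^12 * (a:ℂ) * P^2 * Pc + (13/4 : ℂ) * (s:ℂ)^12 * (a:ℂ) * P^3 + (8 : ℂ) * (s:ℂ)^16 * (a:ℂ) * Pc^2 * X * Xc + (-3 : ℂ) * (s:ℂ)^16 * (a:ℂ) * Pc^3 * Xc * Complex.I + (20/3 : ℂ) * (s:ℂ)^16 * (a:ℂ) * Pc^3 * X * Complex.I + (3/2 : ℂ) * (s:ℂ)^16 * (a:ℂ) * Pc^4 + (16 : ℂ) * (s:ℂ)^16 * (a:ℂ) * P * Pc * X * Xc + (-8 : ℂ) * (s:ℂ)^16 * (a:ℂ) * P * Pc^2 * Xc * Complex.I + (18 : ℂ) * (s:ℂ)^16 * (a:ℂ) * P * Pc^2 * X * Complex.I + (13/2 : ℂ) * (s:ℂ)^16 * (a:ℂ) * P * Pc^3 + (8 : ℂ) * (s:ℂ)^16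 * (a:ℂ) * P^2 * X * Xc + (-18 : ℂ) * (s:ℂ)^16 * (a:ℂ) * P^2 * Pc * Xc * Complex.I + (8 : ℂ) * (s:ℂ)^16 * (a:ℂ) * P^2 * Pc * X * Complex.I + (9 : ℂ) * (s:ℂ)^16 * (a:ℂ) * P^2 * Pc^2 + (-20/3 : ℂ) * (s:ℂ)^16 * (a:ℂ) * P^3 * Xc * Complex.I + (3 : ℂ) * (s:ℂ)^16 * (a:ℂ) * P^3 * X * Complex.I + (13/2 : ℂ) * (s:ℂ)^16 * (a:ℂ) * P^3 * Pc + (3/2 : ℂ) * (s:ℂ)^16 * (a:ℂ) * P^4 + (8/3 : ℂ) * (s:ℂ)^20 * (a:ℂ) * Pc^3 * X * Xc + (3/2 : ℂ) * (s:ℂ)^20 * (a:ℂ) * Pc^4 * X * Complex.I + (8 : ℂ) * (s:ℂ)^20 * (a:ℂ) * P * Pc^2 * X * Xc + (-4 : ℂ) * (s:ℂ)^20 * (a:ℂ) * P * Pc^3 * Xc * Complex.I + (8 : ℂ) * (s:ℂ)^20 * (a:ℂ) * P * Pc^3 * X * Complex.I + (15/8 : ℂ) * (s:ℂ)^20 *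 (a:ℂ) * P * Pc^4 + (8 : ℂ) * (s:ℂ)^20 * (a:ℂ) * P^2 * Pc * X * Xc + (-3 : ℂ) * (s:ℂ)^20 * (a:ℂ) * P^2 * Pc^2 * Xc * Complex.I + (3 : ℂ) * (s:ℂ)^20 * (a:ℂ) * P^2 * Pc^2 * X * Complex.I + (9/4 : ℂ) * (s:ℂ)^20 * (a:ℂ) * P^2 * Pc^3 + (8/3 : ℂ) * (s:ℂ)^20 * (a:ℂ) * P^3 * X * Xc + (-8 : ℂ) * (s:ℂ)^20 * (a:ℂ) * P^3 * Pc * Xc * Complex.I + (4 : ℂ) * (s:ℂ)^20 * (a:ℂ) * P^3 * Pc * X * Complex.I + (9/4 : ℂ) * (s:ℂ)^20 * (a:ℂ) * P^3 * Pc^2 + (-3/2 : ℂ) * (s:ℂ)^20 * (a:ℂ) * P^4 * Xc * Complex.I + (15/8 : ℂ) * (s:ℂ)^20 * (a:ℂ) * P^4 * Pc + (8/3 : ℂ) * (s:ℂ)^24 * (a:ℂ) * P * Pc^3 * X * Xc + (3/2 : ℂ) * (s:ℂ)^24 * (a:ℂ) * P * Pc^4 * X * Complex.I + (-1 : ℂ)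 * (s:ℂ)^24 * (a:ℂ) * P^2 * Pc^3 * Xc * Complex.I + (3/8 : ℂ) * (s:ℂ)^24 * (a:ℂ) * P^2 * Pc^4 + (8/3 : ℂ) * (s:ℂ)^24 * (a:ℂ) * P^3 * Pc * X * Xc + (1 : ℂ) * (s:ℂ)^24 * (a:ℂ) * P^3 * Pc^2 * X * Complex.I + (-3/2 : ℂ) * (s:ℂ)^24 * (a:ℂ) * P^4 * Pc * Xc * Complex.I + (3/8 : ℂ) * (s:ℂ)^24 * (a:ℂ) * P^4 * Pc^2)

noncomputable def hA (a s : ℝ) (P Pc X Xc : ℂ) : ℂ :=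
  ((-3/2 : ℂ) + (8 : ℂ) * (s:ℂ)^4 * (a:ℂ) + (-32/3 : ℂ) * (s:ℂ)^8 * (a:ℂ) * Xc * Complex.I + (32/3 : ℂ) * (s:ℂ)^8 * (a:ℂ) * X * Complex.I + (32 : ℂ) * (s:ℂ)^8 * (a:ℂ) * Pc + (32 : ℂ) * (s:ℂ)^8 * (a:ℂ) * P + (-16 : ℂ) * (s:ℂ)^12 * (a:ℂ) * Pc * Xc * Complex.I + (16 : ℂ) * (s:ℂ)^12 * (a:ℂ) * Pc * X * Complex.I + (24 : ℂ) * (s:ℂ)^12 * (a:ℂ) * Pc^2 + (-16 : ℂ) * (s:ℂ)^12 * (a:ℂ) * P * Xc * Complex.I + (16 : ℂ) * (s:ℂ)^12 * (a:ℂ) * P * X * Complex.I + (72 : ℂ) * (s:ℂ)^12 * (a:ℂ) * P * Pc + (24 : ℂ) * (s:ℂ)^12 * (a:ℂ) * P^2 + (-8 : ℂ) * (s:ℂ)^16 * (a:ℂ) * Pc^2 * Xc * Complex.I + (8 : ℂ) * (s:ℂ)^16 * (a:ℂ) * Pc^2 * X * Complex.I + (10 : ℂ) * (s:ℂ)^16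 * (a:ℂ) * Pc^3 + (-16 : ℂ) * (s:ℂ)^16 * (a:ℂ) * P * Pc * Xc * Complex.I + (16 : ℂ) * (s:ℂ)^16 * (a:ℂ) * P * Pc * X * Complex.I + (30 : ℂ) * (s:ℂ)^16 * (a:ℂ) * P * Pc^2 + (-8 : ℂ) * (s:ℂ)^16 * (a:ℂ) * P^2 * Xc * Complex.I + (8 : ℂ) * (s:ℂ)^16 * (a:ℂ) * P^2 * X * Complex.I + (30 : ℂ) * (s:ℂ)^16 * (a:ℂ) * P^2 * Pc + (10 : ℂ) * (s:ℂ)^16 * (a:ℂ) * P^3 + (8/3 : ℂ) * (s:ℂ)^20 * (a:ℂ) * Pc^3 * X * Complex.I + (-8 : ℂ) * (s:ℂ)^20 * (a:ℂ) * P * Pc^2 * Xc * Complex.I + (8 : ℂ) * (s:ℂ)^20 * (a:ℂ) * P * Pc^3 + (8 : ℂ) * (s:ℂ)^20 * (a:ℂ) * P^2 * Pc * X * Complex.I + (-8/3 : ℂ) * (s:ℂ)^20 * (a:ℂ) * P^3 * Xc * Complex.I + (8 : ℂ) * (s:ℂ)^20 * (a:ℂ) * P^3 * Pc)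

noncomputable def kA (a s : ℝ) (P Pc X Xc : ℂ) : ℂ :=
  ((24 : ℂ) * (s:ℂ)^8 * (a:ℂ) + (24 : ℂ) * (s:ℂ)^12 * (a:ℂ) * Pc + (24 : ℂ) * (s:ℂ)^12 * (a:ℂ) * P + (12 : ℂ) * (s:ℂ)^16 * (a:ℂ) * Pc^2 + (12 : ℂ) * (s:ℂ)^16 * (a:ℂ) * P^2)

lemma key_factorization (a s t : ℝ) (P X : ℂ) :
    modelHamiltonian a ((s : ℂ) + (s : ℂ) ^ 5 * P)
        (-s ^ 2 / 2 + s ^ 6 * t) (-3 / 4)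
        (-(3 * Complex.I / 4) * (s : ℂ) + (s : ℂ) ^ 5 * X)
      = (s : ℂ) ^ 6 * (gA a s P (conj P) X (conj X)
          + hA a s P (conj P) X (conj X) * (t : ℂ)
          + kA a s P (conj P) X (conj X) * (t : ℂ) ^ 2) := by
  have habs : ∀ w : ℂ, ((‖w‖ ^ 2 : ℝ) : ℂ) = w * conj w := by
    intro w
    rw [Complex.sq_norm, ← Complex.mul_conj]
  have hre : ∀ w : ℂ, (((w ^ 2).re : ℝ) : ℂ) = (w ^ 2 + (conj w) ^ 2) / 2 := by
    intro w
    have h : w ^ 2 + (conj w) ^ 2 = (2 : ℂ) * (((w ^ 2).re : ℝ) : ℂ) := by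
      rw [← map_pow, Complex.add_conj]; push_cast; ring
    rw [h]; ring
  simp only [modelHamiltonian, gA, hA, kA, habs, hre]
  simp only [map_add, map_mul, map_pow, map_neg, map_div₀, map_ofNat,
    Complex.conj_ofReal, Complex.conj_I, Complex.conj_conj]
  push_cast
  linear_combination (((9/16 : ℂ) * (s:ℂ)^2 + (3/16 : ℂ) * (s:ℂ)^6 * (conj P) + (3/16 : ℂ) * (s:ℂ)^6 * P + (5/4 : ℂ) * (s:ℂ)^6 * (a:ℂ) + (-27/8 : ℂ) * (s:ℂ)^10 * (a:ℂ) * (conj P) + (-27/8 : ℂ) * (s:ℂ)^10 * (a:ℂ) * P + (-16 : ℂ) * (s:ℂ)^10 * (a:ℂ) * (t:ℂ) + (-33/4 : ℂ) * (s:ℂ)^14 * (a:ℂ) * (conj P)^2 + (-15 : ℂ) * (s:ℂ)^14 * (a:ℂ) * P * (conj P) + (-33/4 : ℂ) * (s:ℂ)^14 * (a:ℂ) * P^2 + (-24 : ℂ) * (s:ℂ)^14 * (a:ℂ) * (t:ℂ) * (conj P) + (-24 : ℂ) * (s:ℂ)^14 * (a:ℂ) * (t:ℂ) * P + (-23/4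 : ℂ) * (s:ℂ)^18 * (a:ℂ) * (conj P)^3 + (-15 : ℂ) * (s:ℂ)^18 * (a:ℂ) * P * (conj P)^2 + (-15 : ℂ) * (s:ℂ)^18 * (a:ℂ) * P^2 * (conj P) + (-23/4 : ℂ) * (s:ℂ)^18 * (a:ℂ) * P^3 + (-12 : ℂ) * (s:ℂ)^18 * (a:ℂ) * (t:ℂ) * (conj P)^2 + (-24 : ℂ) * (s:ℂ)^18 * (a:ℂ) * (t:ℂ) * P * (conj P) + (-12 : ℂ) * (s:ℂ)^18 * (a:ℂ) * (t:ℂ) * P^2 + (-9/8 : ℂ) * (s:ℂ)^22 * (a:ℂ) * (conj P)^4 + (-15/2 : ℂ) * (s:ℂ)^22 * (a:ℂ) * P * (conj P)^3 + (-9/2 : ℂ) * (s:ℂ)^22 * (a:ℂ) * P^2 * (conj P)^2 + (-15/2 : ℂ) * (s:ℂ)^22 * (a:ℂ) * P^3 * (conj P) + (-9/8 : ℂ) * (s:ℂ)^22 * (a:ℂ) * P^4 + (-2 : ℂ) * (s:ℂ)^22 * (a:ℂ) * (t:ℂ) * (conj P)^3 + (-6 : ℂ) * (s:ℂ)^22 *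 (a:ℂ) * (t:ℂ) * P * (conj P)^2 + (-6 : ℂ) * (s:ℂ)^22 * (a:ℂ) * (t:ℂ) * P^2 * (conj P) + (-2 : ℂ) * (s:ℂ)^22 * (a:ℂ) * (t:ℂ) * P^3 + (-9/8 : ℂ) * (s:ℂ)^26 * (a:ℂ) * P * (conj P)^4 + (-3/4 : ℂ) * (s:ℂ)^26 * (a:ℂ) * P^2 * (conj P)^3 + (-3/4 : ℂ) * (s:ℂ)^26 * (a:ℂ) * P^3 * (conj P)^2 + (-9/8 : ℂ) * (s:ℂ)^26 * (a:ℂ) * P^4 * (conj P))) * Complex.I_sq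

lemma conj_mH (a : ℝ) (z : ℂ) (p0 p1 : ℝ) (p : ℂ) :
    conj (modelHamiltonian a z p0 p1 p) = modelHamiltonian a z p0 p1 p := by
  simp only [modelHamiltonian, map_add, map_sub, map_mul, map_pow, map_neg, map_div₀,
    map_ofNat, map_one, Complex.conj_ofReal, Complex.conj_I, Complex.conj_conj]
  ring

@[fun_prop]
lemma contDiff_ofReal_cast (n : ℕ∞) : ContDiff ℝ n (fun r : ℝ => (r : ℂ)) :=
  Complex.ofRealCLM.contDiff

private lemma re_quad (z1 z2 z3 : ℂ) (c : ℝ) :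
    (z1 + z2 * (c : ℂ) + z3 * (c : ℂ) ^ 2).re = z1.re + z2.re * c + z3.re * c ^ 2 := by
  have h2 : (z3 * (c : ℂ) ^ 2).re = z3.re * c ^ 2 := by
    rw [show ((c : ℂ)) ^ 2 = ((c ^ 2 : ℝ) : ℂ) by push_cast; ring,
      Complex.mul_re, Complex.ofReal_re, Complex.ofReal_im]
    ring
  have h1 : (z2 * (c : ℂ)).re = z2.re * c := by
    rw [Complex.mul_re, Complex.ofReal_re, Complex.ofReal_im]; ring
  rw [Complex.add_re, Complex.add_re, h1, h2]

private lemma quad_root_aux (g h k D r : ℝ) (hD : D ≠ 0) (hDr : D = h - r)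
    (hr2 : r ^ 2 = h ^ 2 - 4 * k * g) :
    k * (-2 * g / D) ^ 2 + h * (-2 * g / D) + g = 0 := by
  have e1 : (k * (-2 * g / D) ^ 2 + h * (-2 * g / D) + g) * D ^ 2
      = g * (D ^ 2 - 2 * h * D + 4 * k * g) := by
    field_simp
    ring
  have e2 : D ^ 2 - 2 * h * D + 4 * k * g = 0 := by
    rw [hDr]; linear_combination hr2
  rw [e2, mul_zero] at e1
  exact (mul_eq_zero.mp e1).resolve_right (pow_ne_zero _ hD)

/-- Existence of the correction `χ` making the model Hamiltonian vanish
along the special family of initial conditions. -/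
theorem exists_chi_model_hamiltonian_vanishes
    (a : ℝ) (ε₀ : ℝ) (hε₀ : 0 < ε₀) (ψ ξ : ℝ → ℂ)
    (hψ : ContDiffOn ℝ 7 ψ (Set.Ioo (-ε₀) ε₀))
    (hξ : ContDiffOn ℝ 7 ξ (Set.Ioo (-ε₀) ε₀)) :
    ∃ ε : ℝ, 0 < ε ∧ ε ≤ ε₀ ∧ ∃ χ : ℝ → ℝ, ContDiffOn ℝ 7 χ (Set.Ioo (-ε) ε) ∧
      ∀ s ∈ Set.Ioo (-ε) ε,
        modelHamiltonian a ((s : ℂ) + (s : ℂ) ^ 5 * ψ s)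
          (-s ^ 2 / 2 + s ^ 6 * χ s) (-3 / 4)
          (-(3 * Complex.I / 4) * (s : ℂ) + (s : ℂ) ^ 5 * ξ s) = 0 := by
  classical
  have hconj : ContDiff ℝ 7 (fun w : ℂ => conj w) := by
    have h : ContDiff ℝ 7 ⇑(Complex.conjCLE.toContinuousLinearMap) :=
      ContinuousLinearMap.contDiff _
    exact h
  have hψc : ContDiffOn ℝ 7 (fun x => conj (ψ x)) (Set.Ioo (-ε₀) ε₀) :=
    hconj.comp_contDiffOn hψ
  have hξc : ContDiffOn ℝ 7 (fun x => conj (ξ x)) (Set.Ioo (-ε₀) ε₀) :=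
    hconj.comp_contDiffOn hξ
  -- the coefficient functions
  set gC : ℝ → ℂ := fun x => gA a x (ψ x) (conj (ψ x)) (ξ x) (conj (ξ x)) with hgCdef
  set hC : ℝ → ℂ := fun x => hA a x (ψ x) (conj (ψ x)) (ξ x) (conj (ξ x)) with hhCdef
  set kC : ℝ → ℂ := fun x => kA a x (ψ x) (conj (ψ x)) (ξ x) (conj (ξ x)) with hkCdef
  have hgCd : ContDiffOn ℝ 7 gC (Set.Ioo (-ε₀) ε₀) := by
    simp only [hgCdef, gA]; fun_prop
  have hhCd : ContDiffOn ℝ 7 hC (Set.Ioo (-ε₀) ε₀) := by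
    simp only [hhCdef, hA]; fun_prop
  have hkCd : ContDiffOn ℝ 7 kC (Set.Ioo (-ε₀) ε₀) := by
    simp only [hkCdef, kA]; fun_prop
  have hre : ContDiff ℝ 7 (fun w : ℂ => w.re) := Complex.reCLM.contDiff.of_le le_top
  set gR : ℝ → ℝ := fun x => (gC x).re with hgRdef
  set hR : ℝ → ℝ := fun x => (hC x).re with hhRdef
  set kR : ℝ → ℝ := fun x => (kC x).re with hkRdef
  have hgRd : ContDiffOn ℝ 7 gR (Set.Ioo (-ε₀) ε₀) := hre.comp_contDiffOn hgCd
  have hhRd : ContDiffOn ℝ 7 hR (Set.Ioo (-ε₀) ε₀) := hre.comp_contDiffOn hhCd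
  have hkRd : ContDiffOn ℝ 7 kR (Set.Ioo (-ε₀) ε₀) := hre.comp_contDiffOn hkCd
  -- values at 0
  have h0mem : (0:ℝ) ∈ Set.Ioo (-ε₀) ε₀ := by
    rw [Set.mem_Ioo]; constructor <;> linarith
  have hIooNhds : Set.Ioo (-ε₀) ε₀ ∈ nhds (0:ℝ) :=
    Ioo_mem_nhds (by linarith) hε₀
  have hH0 : hR 0 = -3/2 := by
    have : hA a 0 (ψ 0) (conj (ψ 0)) (ξ 0) (conj (ξ 0)) = ((-3/2 : ℝ) : ℂ) := by
      simp [hA]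
    simp [hhRdef, hhCdef, this]
  have hK0 : kR 0 = 0 := by
    have : kA a 0 (ψ 0) (conj (ψ 0)) (ξ 0) (conj (ξ 0)) = 0 := by
      simp [kA]
    simp [hkRdef, hkCdef, this]
  -- discriminant and denominator
  set u : ℝ → ℝ := fun x => hR x ^ 2 - 4 * kR x * gR x with hudef
  set D : ℝ → ℝ := fun x => hR x - Real.sqrt (u x) with hDdef
  have hucont : ContinuousAt u 0 := by
    have := ((hgRd.continuousOn.continuousAt hIooNhds))
    have := ((hhRd.continuousOn.continuousAt hIooNhds))
    have := ((hkRd.continuousOn.continuousAt hIooNhds))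
    fun_prop
  have hu0 : u 0 = 9/4 := by
    simp [hudef, hH0, hK0]; norm_num
  have hDcont : ContinuousAt D 0 := by
    have h1 := (hhRd.continuousOn.continuousAt hIooNhds)
    have h2 : ContinuousAt (fun x => Real.sqrt (u x)) 0 :=
      Real.continuous_sqrt.continuousAt.comp hucont
    exact h1.sub h2
  have hD0 : D 0 = -3 := by
    rw [hDdef]
    simp only [hu0, hH0]
    rw [show (9/4:ℝ) = (3/2)^2 by norm_num, Real.sqrt_sq (by norm_num)]
    norm_num
  -- choose ε
  have hev : ∀ᶠ x in nhds (0:ℝ), 0 < u x ∧ D x < 0 ∧ x ∈ Set.Ioo (-ε₀) ε₀ := by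
    have e1 : ∀ᶠ x in nhds (0:ℝ), 0 < u x := by
      have : ∀ᶠ y in nhds (u 0), 0 < y := by
        rw [hu0]; exact eventually_gt_nhds (by norm_num)
      exact hucont.eventually this
    have e2 : ∀ᶠ x in nhds (0:ℝ), D x < 0 := by
      have : ∀ᶠ y in nhds (D 0), y < 0 := by
        rw [hD0]; exact eventually_lt_nhds (by norm_num)
      exact hDcont.eventually this
    exact e1.and (e2.and hIooNhds)
  obtain ⟨δ, hδpos, hδ⟩ := Metric.eventually_nhds_iff_ball.mp hev
  set ε : ℝ := min δ ε₀ with hεdef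
  have hεpos : 0 < ε := lt_min hδpos hε₀
  have hεle : ε ≤ ε₀ := min_le_right _ _
  have hsub : Set.Ioo (-ε) ε ⊆ Set.Ioo (-ε₀) ε₀ :=
    Set.Ioo_subset_Ioo (neg_le_neg hεle) hεle
  have hball : ∀ x ∈ Set.Ioo (-ε) ε, 0 < u x ∧ D x < 0 ∧ x ∈ Set.Ioo (-ε₀) ε₀ := by
    intro x hx
    apply hδ
    rw [Metric.mem_ball, Real.dist_eq, sub_zero, abs_lt]
    constructor
    · have := hx.1; have : -ε ≤ x := le_of_lt hx.1
      have hεδ : ε ≤ δ := min_le_left _ _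
      linarith [hx.1]
    · have hεδ : ε ≤ δ := min_le_left _ _
      linarith [hx.2]
  set χfun : ℝ → ℝ := fun x => -2 * gR x / D x with hχfun
  refine ⟨ε, hεpos, hεle, χfun, ?_, ?_⟩
  · -- smoothness of χ
    have hgRd' : ContDiffOn ℝ 7 gR (Set.Ioo (-ε) ε) := hgRd.mono hsub
    have hhRd' : ContDiffOn ℝ 7 hR (Set.Ioo (-ε) ε) := hhRd.mono hsub
    have hkRd' : ContDiffOn ℝ 7 kR (Set.Ioo (-ε) ε) := hkRd.mono hsub
    have hud' : ContDiffOn ℝ 7 u (Set.Ioo (-ε) ε) := by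
      simp only [hudef]
      exact (hhRd'.pow 2).sub ((contDiffOn_const.mul hkRd').mul hgRd')
    have hopen : IsOpen (Set.Ioo (-ε) ε) := isOpen_Ioo
    have hsq : ContDiffOn ℝ 7 (fun x => Real.sqrt (u x)) (Set.Ioo (-ε) ε) := by
      intro x hx
      have hx1 : ContDiffAt ℝ 7 u x := (hud' x hx).contDiffAt (hopen.mem_nhds hx)
      have hx2 : ContDiffAt ℝ 7 Real.sqrt (u x) :=
        Real.contDiffAt_sqrt (ne_of_gt (hball x hx).1)
      exact (hx2.comp x hx1).contDiffWithinAt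
    have hDd' : ContDiffOn ℝ 7 D (Set.Ioo (-ε) ε) := by
      simp only [hDdef]; exact hhRd'.sub hsq
    exact (contDiffOn_const.mul hgRd').div hDd'
      (fun x hx => ne_of_lt (hball x hx).2.1)
  · -- the Hamiltonian vanishes
    intro x hx
    obtain ⟨hu_pos, hD_neg, _⟩ := hball x hx
    rw [key_factorization a x (χfun x) (ψ x) (ξ x)]
    set χx : ℝ := χfun x with hχset
    have hχdef : χx = -2 * gR x / D x := rfl
    rcases eq_or_ne x 0 with hx0 | hx0
    · subst hx0; simp
    -- quadratic identity
    have hr2 : Real.sqrt (u x) ^ 2 = hR x ^ 2 - 4 * kR x * gR x := by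
      rw [Real.sq_sqrt (le_of_lt hu_pos)]
    have hDne : D x ≠ 0 := ne_of_lt hD_neg
    have hquad : kR x * χx ^ 2 + hR x * χx + gR x = 0 := by
      rw [hχdef]
      exact quad_root_aux (gR x) (hR x) (kR x) (D x) (Real.sqrt (u x)) hDne rfl hr2
    -- realness
    have hreal := conj_mH a ((x : ℂ) + (x : ℂ) ^ 5 * ψ x)
      (-x ^ 2 / 2 + x ^ 6 * χx) (-3/4)
      (-(3 * Complex.I / 4) * (x : ℂ) + (x : ℂ) ^ 5 * ξ x)
    rw [key_factorization a x χx (ψ x) (ξ x)] at hreal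
    set w : ℂ := gC x + hC x * (χx : ℂ) + kC x * (χx : ℂ)^2 with hwdef
    have hxC : ((x:ℂ))^6 ≠ 0 := pow_ne_zero _ (by exact_mod_cast Complex.ofReal_ne_zero.mpr hx0)
    have hconjw : conj w = w := by
      have : conj ((x:ℂ)^6) * conj w = (x:ℂ)^6 * w := by
        rw [← map_mul]; exact hreal
      rw [show conj ((x:ℂ)^6) = (x:ℂ)^6 by simp [map_pow, Complex.conj_ofReal]] at this
      exact mul_left_cancel₀ hxC this
    have hwre : w.re = gR x + hR x * χx + kR x * χx ^ 2 := by
      rw [hwdef]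
      exact re_quad (gC x) (hC x) (kC x) χx
    have hwzero : w = 0 := by
      have him : w.im = 0 := by
        have := congrArg Complex.im hconjw
        simp only [Complex.conj_im] at this
        linarith
      have hre0 : w.re = 0 := by rw [hwre]; linarith [hquad]
      exact Complex.ext hre0 him
    rw [hwzero, mul_zero]
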